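/- Let G be a finitely generated group with a free abelian normal subgroup A of finite index. Then the set of generalized torsion elements of G is a normal subgroup of G. -/

import Mathlib

/-- `g` is a generalized torsion element of `G`: some nonempty finite product of
conjugates of `g` equals the identity. -/
def IsGenTorsion {G : Type*} [Group G] (g : G) : Prop :=
  ∃ xs : List G, xs ≠ [] ∧ (xs.map (fun x => x⁻¹ * g * x)).prod = 1

private lemma conj_pow_eq {G : Type*} [Group G] (x g : G) (m : ℕ) :
    (x⁻¹ * g * x) ^ m = x⁻¹ * g ^ m * x := by
  induction m with
  | zero => group
  | succ m ih => rw [pow_succ, ih, pow_succ]; group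

private lemma isGenTorsion_of_pow {G : Type*} [Group G] {g : G} {m : ℕ} (hm : m ≠ 0)
    (h : IsGenTorsion (g ^ m)) : IsGenTorsion g := by
  obtain ⟨xs, hne, hprod⟩ := h
  refine ⟨xs.flatMap (fun x => List.replicate m x), ?_, ?_⟩
  · obtain ⟨x, xs', rfl⟩ := List.exists_cons_of_ne_nil hne
    simp only [List.flatMap_cons]
    intro hcontra
    rcases List.append_eq_nil_iff.mp hcontra with ⟨h1, -⟩
    exact hm (by simpa using congrArg List.length h1)
  · have key : ∀ ys : List G,
        ((ys.flatMap (fun x => List.replicate m x)).map (fun x => x⁻¹ * g * x)).prod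
          = (ys.map (fun x => x⁻¹ * g ^ m * x)).prod := by
      intro ys
      induction ys with
      | nil => simp
      | cons y ys ih =>
          simp only [List.flatMap_cons, List.map_append, List.prod_append, List.map_cons,
            List.prod_cons, ih, List.map_replicate, List.prod_replicate, conj_pow_eq]
    rw [key, hprod]

private lemma key_lemma {G : Type*} [Group G] (A : Subgroup G) [hA : A.Normal]
    [A.FiniteIndex] {n : ℕ} (e : A ≃* Multiplicative (Fin n → ℤ))
    {a : G} (ha : a ∈ A) {k : ℕ} (hk : k ≠ 0)
    (htor : (Abelianization.of a : Abelianization G) ^ k = 1) : IsGenTorsion a := by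
  classical
  haveI : Fintype (G ⧸ A) := Fintype.ofFinite _
  letI : CommGroup ↥A :=
    { (inferInstance : Group ↥A) with
      mul_comm := fun x y => e.injective (by rw [map_mul, map_mul, mul_comm]) }
  let t : G ⧸ A → G := fun q => q.out
  have ht : ∀ q : G ⧸ A, QuotientGroup.mk (t q) = q := fun q => QuotientGroup.out_eq' q
  have hfmem : ∀ q : G ⧸ A, (t q)⁻¹ * a * t q ∈ A := by
    intro q
    have := hA.conj_mem a ha (t q)⁻¹
    simpa [mul_assoc] using this
  let f : G ⧸ A → ↥A := fun q => ⟨(t q)⁻¹ * a * t q, hfmem q⟩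
  -- pointwise conjugation formula
  have hpoint : ∀ (x : G) (q : G ⧸ A),
      x⁻¹ * ((f q : G)) * x = (f (q * QuotientGroup.mk x) : G) := by
    intro x q
    set q' := q * QuotientGroup.mk x with hq'def
    set α : G := (t q')⁻¹ * (t q * x) with hαdef
    have hαmem : α ∈ A := by
      rw [← QuotientGroup.eq_one_iff, hαdef]
      have h1 : (QuotientGroup.mk (t q * x) : G ⧸ A) = q' := by
        rw [QuotientGroup.mk_mul, ht]
      have h2 : (QuotientGroup.mk (t q') : G ⧸ A) = q' := ht q'
      rw [QuotientGroup.mk_mul, QuotientGroup.mk_inv, h1, h2, inv_mul_cancel]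
    have htx : t q * x = t q' * α := by rw [hαdef]; group
    have hcomm' : α * ((f q' : G)) = ((f q' : G)) * α := by
      have := mul_comm (⟨α, hαmem⟩ : ↥A) (f q')
      exact congrArg Subtype.val this
    have : x⁻¹ * ((f q : G)) * x = (t q * x)⁻¹ * a * (t q * x) := by
      show x⁻¹ * ((t q)⁻¹ * a * t q) * x = _
      group
    rw [this, htx]
    show (t q' * α)⁻¹ * a * (t q' * α) = (t q')⁻¹ * a * t q'
    have expand : (t q' * α)⁻¹ * a * (t q' * α) = α⁻¹ * ((t q')⁻¹ * a * t q') * α := by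
      group
    rw [expand]
    show α⁻¹ * ((f q' : G)) * α = ((f q' : G))
    rw [mul_assoc, ← hcomm', ← mul_assoc, inv_mul_cancel, one_mul]
  -- the norm element b
  let b : ↥A := ∏ q : G ⧸ A, f q
  -- b is central
  have hbc : ∀ x : G, x⁻¹ * (b : G) * x = (b : G) := by
    intro x
    let cA : ↥A →* ↥A :=
      { toFun := fun s => ⟨x⁻¹ * (s : G) * x, by
          have := hA.conj_mem (s : G) s.2 x⁻¹
          simpa [mul_assoc] using this⟩
        map_one' := by ext; simp
        map_mul' := by
          intro u v
          ext
          show x⁻¹ * ((u : G) * (v : G)) * x = (x⁻¹ * (u : G) * x) * (x⁻¹ * (v : G) * x)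
          group }
    have h1 : x⁻¹ * (b : G) * x = ((cA b : ↥A) : G) := rfl
    rw [h1, map_prod]
    have h2 : ∀ q ∈ (Finset.univ : Finset (G ⧸ A)), cA (f q) = f (q * QuotientGroup.mk x) :=
      fun q _ => Subtype.ext (hpoint x q)
    rw [Finset.prod_congr rfl h2]
    congr 1
    exact Fintype.prod_equiv (Equiv.mulRight (QuotientGroup.mk x)) _ _ (fun q => rfl)
  -- b as a list product of conjugates of a
  let qs : List (G ⧸ A) := (Finset.univ : Finset (G ⧸ A)).toList
  have hqs : (b : G) = (qs.map (fun q => (t q)⁻¹ * a * t q)).prod := by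
    have h1 : b = (qs.map f).prod := (Finset.prod_map_toList _ f).symm
    calc (b : G) = A.subtype ((qs.map f).prod) := by rw [← h1]; rfl
      _ = ((qs.map f).map A.subtype).prod := map_list_prod _ _
      _ = (qs.map (fun q => (t q)⁻¹ * a * t q)).prod := by rw [List.map_map]; rfl
  -- image in the abelianization
  have hab : (Abelianization.of (b : G) : Abelianization G)
      = (Abelianization.of a) ^ qs.length := by
    rw [hqs, map_list_prod, List.map_map]
    have hconst : ∀ y ∈ qs.map ((Abelianization.of : G →* Abelianization G) ∘
        fun q => (t q)⁻¹ * a * t q), y = Abelianization.of a := by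
      intro y hy
      obtain ⟨q, -, rfl⟩ := List.mem_map.mp hy
      show Abelianization.of ((t q)⁻¹ * a * t q) = Abelianization.of a
      rw [map_mul, map_mul, map_inv, mul_comm ((Abelianization.of (t q))⁻¹)
        (Abelianization.of a), mul_assoc, inv_mul_cancel, mul_one]
    rw [List.prod_eq_pow_card _ (Abelianization.of a) hconst, List.length_map]
  -- transfer
  let ϕ : ↥A →* Multiplicative (Fin n → ℤ) := e.toMonoidHom
  have hkey : ∀ (j : ℕ) (g₀ : G), g₀⁻¹ * (b : G) ^ j * g₀ ∈ A →
      g₀⁻¹ * (b : G) ^ j * g₀ = (b : G) ^ j := by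
    intro j g₀ _
    rw [← conj_pow_eq g₀ (b : G) j, hbc g₀]
  have hVb := MonoidHom.transfer_eq_pow ϕ (b : G) hkey
  have hVbk : (MonoidHom.transfer ϕ (b : G)) ^ k = 1 := by
    rw [← map_pow]
    have hofbk : (Abelianization.of ((b : G) ^ k) : Abelianization G) = 1 := by
      rw [map_pow, hab, ← pow_mul, mul_comm, pow_mul, htor, one_pow]
    have : MonoidHom.transfer ϕ ((b : G) ^ k)
        = Abelianization.lift (MonoidHom.transfer ϕ) (Abelianization.of ((b : G) ^ k)) :=
      (Abelianization.lift_apply_of _ _).symm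
    rw [this, hofbk, map_one]
  -- deduce b = 1 from torsion-freeness
  have hpow : (e b) ^ (A.index * k) = 1 := by
    rw [hVb] at hVbk
    have h2 : (⟨(b : G) ^ A.index, MonoidHom.transfer_eq_pow_aux (b : G) hkey⟩ : ↥A)
        = b ^ A.index := by
      ext; simp
    rw [h2] at hVbk
    have h3 : ϕ ((b ^ A.index) ^ k) = 1 := by rw [map_pow]; exact hVbk
    rw [← pow_mul] at h3
    show (e b) ^ (A.index * k) = 1
    calc (e b) ^ (A.index * k) = e (b ^ (A.index * k)) := (map_pow e b _).symm
      _ = 1 := h3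
  have hmk : A.index * k ≠ 0 :=
    Nat.mul_ne_zero Subgroup.FiniteIndex.index_ne_zero hk
  have heb : e b = 1 := by
    have hsmul : (A.index * k) • (Multiplicative.toAdd (e b)) = 0 := by
      rw [← toAdd_pow, hpow]; rfl
    have hv : Multiplicative.toAdd (e b) = 0 := by
      funext i
      have := congrFun hsmul i
      simp only [Pi.smul_apply, Pi.zero_apply, smul_eq_mul, nsmul_eq_mul] at this
      rcases mul_eq_zero.mp this with h | h
      · exact absurd (Nat.cast_eq_zero.mp (by exact_mod_cast h)) hmk
      · exact h
    calc e b = Multiplicative.ofAdd (Multiplicative.toAdd (e b)) := rfl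
    _ = Multiplicative.ofAdd 0 := by rw [hv]
    _ = 1 := rfl
  have hb1 : b = 1 := e.injective (by rw [heb, map_one])
  -- conclusion
  refine ⟨qs.map t, ?_, ?_⟩
  · have hqsne : qs ≠ [] := by
      intro hcontra
      have : (Finset.univ : Finset (G ⧸ A)) = ∅ := Finset.toList_eq_nil.mp hcontra
      have h1 : (1 : G ⧸ A) ∈ (Finset.univ : Finset (G ⧸ A)) := Finset.mem_univ _
      rw [this] at h1
      exact absurd h1 (Finset.notMem_empty _)
    simpa using hqsne
  · rw [List.map_map]
    have : (qs.map ((fun x => x⁻¹ * a * x) ∘ t)).prod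
        = (qs.map (fun q => (t q)⁻¹ * a * t q)).prod := rfl
    rw [this, ← hqs, hb1]
    rfl

theorem genTorsion_is_normal_subgroup {G : Type*} [Group G] [Group.FG G]
    (A : Subgroup G) [A.Normal] (hfin : A.index ≠ 0)
    (hfree : ∃ n : ℕ, Nonempty (A ≃* Multiplicative (Fin n → ℤ))) :
    ∃ H : Subgroup G, H.Normal ∧ ∀ g : G, g ∈ H ↔ IsGenTorsion g := by
  obtain ⟨n, ⟨e⟩⟩ := hfree
  haveI : A.FiniteIndex := ⟨hfin⟩
  refine ⟨(CommGroup.torsion (Abelianization G)).comap Abelianization.of, inferInstance, ?_⟩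
  intro g
  rw [Subgroup.mem_comap, CommGroup.mem_torsion, isOfFinOrder_iff_pow_eq_one]
  constructor
  · rintro ⟨k, hk, hgk⟩
    apply isGenTorsion_of_pow hfin (g := g) (m := A.index)
    apply key_lemma A e (A.pow_index_mem g) (k := k) hk.ne'
    rw [map_pow, ← pow_mul, mul_comm, pow_mul, hgk, one_pow]
  · rintro ⟨xs, hne, hprod⟩
    refine ⟨xs.length, List.length_pos_iff.mpr hne, ?_⟩
    have h1 := congrArg (Abelianization.of : G →* Abelianization G) hprod
    rw [map_list_prod, List.map_map, map_one] at h1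
    have hconst : ∀ y ∈ xs.map ((Abelianization.of : G →* Abelianization G) ∘
        fun x => x⁻¹ * g * x), y = Abelianization.of g := by
      intro y hy
      obtain ⟨x, -, rfl⟩ := List.mem_map.mp hy
      show Abelianization.of (x⁻¹ * g * x) = Abelianization.of g
      rw [map_mul, map_mul, map_inv, mul_comm ((Abelianization.of x)⁻¹)
        (Abelianization.of g), mul_assoc, inv_mul_cancel, mul_one]
    rw [List.prod_eq_pow_card _ (Abelianization.of g) hconst, List.length_map] at h1
    exact h1
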